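/- arXiv:2506.08506 — 3 statements merged into one kernel-verified Lean document; each statement's English description precedes it below -/
import Mathlib

section
/- Let n ≥ 3 and let Q₁, Q₂ be real symmetric n×n matrices. Define H(Q₁,Q₂) := {(xᵀx, xᵀQ₁x, xᵀQ₂x) : x ∈ ℝⁿ} ⊆ ℝ³. Then H(Q₁,Q₂) is a convex cone, and H(Q₁,Q₂) = {(Tr(X), Tr(Q₁X), Tr(Q₂X)) : X real symmetric n×n positive semidefinite}. -/
open Matrix Real

section BrickmanAux

variable {n : ℕ}

set_option maxHeartbeats 1000000


lemma dsymm (A : Matrix (Fin n) (Fin n) ℝ) (hA : A.IsSymm) (x y : Fin n → ℝ) :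
    x ⬝ᵥ A *ᵥ y = y ⬝ᵥ A *ᵥ x := by
  rw [dotProduct_mulVec, ← mulVec_transpose, hA.eq, dotProduct_comm]

lemma contq (A : Matrix (Fin n) (Fin n) ℝ) : Continuous fun y : Fin n → ℝ => y ⬝ᵥ A *ᵥ y := by
  simp only [dotProduct, Matrix.mulVec, dotProduct]
  exact continuous_finset_sum _ fun i _ => (continuous_apply i).mul
    (continuous_finset_sum _ fun j _ => (continuous_const.mul (continuous_apply j)))

lemma q_add2 (A : Matrix (Fin n) (Fin n) ℝ) (hA : A.IsSymm) (a b : ℝ) (v w : Fin n → ℝ) :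
    (a • v + b • w) ⬝ᵥ A *ᵥ (a • v + b • w) =
      a^2 * (v ⬝ᵥ A *ᵥ v) + b^2 * (w ⬝ᵥ A *ᵥ w) + 2*a*b*(v ⬝ᵥ A *ᵥ w) := by
  simp only [Matrix.mulVec_add, Matrix.mulVec_smul, dotProduct_add, add_dotProduct,
    dotProduct_smul, smul_dotProduct, smul_eq_mul]
  rw [dsymm A hA w v]; ring

lemma ivt_pair (P Q : Matrix (Fin n) (Fin n) ℝ) (hP : P.IsSymm) (hQ : Q.IsSymm)
    (y z : Fin n → ℝ) (hqy : y ⬝ᵥ Q *ᵥ y = 0) (hqz : z ⬝ᵥ Q *ᵥ z = 0)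
    (hB : y ⬝ᵥ Q *ᵥ z = 0) (hpy : y ⬝ᵥ P *ᵥ y < 0) (hpz : 0 < z ⬝ᵥ P *ᵥ z)
    (hind : ∀ a b : ℝ, a • y + b • z = 0 → a = 0 ∧ b = 0) :
    ∃ x : Fin n → ℝ, x ≠ 0 ∧ x ⬝ᵥ P *ᵥ x = 0 ∧ x ⬝ᵥ Q *ᵥ x = 0 := by
  set g : ℝ → (Fin n → ℝ) := fun t => Real.cos t • y + Real.sin t • z with hg
  have hcg : Continuous g := (Real.continuous_cos.smul continuous_const).add
    (Real.continuous_sin.smul continuous_const)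
  have hf : Continuous fun t => (g t) ⬝ᵥ P *ᵥ (g t) := (contq P).comp hcg
  have h0 : (g 0) ⬝ᵥ P *ᵥ (g 0) < 0 := by simp [hg, q_add2 P hP, hpy]
  have h1 : 0 < (g (π/2)) ⬝ᵥ P *ᵥ (g (π/2)) := by simp [hg, q_add2 P hP, hpz]
  have hmem : (0:ℝ) ∈ Set.Icc ((g 0) ⬝ᵥ P *ᵥ (g 0)) ((g (π/2)) ⬝ᵥ P *ᵥ (g (π/2))) :=
    ⟨le_of_lt h0, le_of_lt h1⟩
  obtain ⟨t, ht, hgt⟩ := intermediate_value_Icc (by positivity : (0:ℝ) ≤ π/2)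
    hf.continuousOn hmem
  refine ⟨g t, ?_, hgt, by simp [hg, q_add2 Q hQ, hqy, hqz, hB]⟩
  intro h
  obtain ⟨hc, hs⟩ := hind _ _ h
  exact absurd (Real.sin_sq_add_cos_sq t) (by rw [hs, hc]; norm_num)

lemma q_add3 (A : Matrix (Fin n) (Fin n) ℝ) (hA : A.IsSymm) (a b c : ℝ) (v w u : Fin n → ℝ) :
    (a • v + b • w + c • u) ⬝ᵥ A *ᵥ (a • v + b • w + c • u) =
      a^2 * (v ⬝ᵥ A *ᵥ v) + b^2 * (w ⬝ᵥ A *ᵥ w) + c^2 * (u ⬝ᵥ A *ᵥ u)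
      + 2*a*b*(v ⬝ᵥ A *ᵥ w) + 2*a*c*(v ⬝ᵥ A *ᵥ u) + 2*b*c*(w ⬝ᵥ A *ᵥ u) := by
  simp only [Matrix.mulVec_add, Matrix.mulVec_smul, dotProduct_add, add_dotProduct,
    dotProduct_smul, smul_dotProduct, smul_eq_mul]
  rw [dsymm A hA w v, dsymm A hA u v, dsymm A hA u w]
  ring

lemma q_smul {n : ℕ} (A : Matrix (Fin n) (Fin n) ℝ) (a : ℝ) (v : Fin n → ℝ) :
    (a • v) ⬝ᵥ A *ᵥ (a • v) = a^2 * (v ⬝ᵥ A *ᵥ v) := by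
  simp [Matrix.mulVec_smul, smul_dotProduct, dotProduct_smul, smul_eq_mul]; ring

lemma q_add2' {n : ℕ} (A : Matrix (Fin n) (Fin n) ℝ) (hA : A.IsSymm) (a b : ℝ) (v w : Fin n → ℝ) :
    (a • v + b • w) ⬝ᵥ A *ᵥ (a • v + b • w) =
      a^2 * (v ⬝ᵥ A *ᵥ v) + b^2 * (w ⬝ᵥ A *ᵥ w) + 2*a*b*(v ⬝ᵥ A *ᵥ w) := by
  have h := q_add3 A hA a b 0 v w w
  simpa using h

lemma crux (hn : 3 ≤ n) (P Q : Matrix (Fin n) (Fin n) ℝ) (hP : P.IsSymm) (hQ : Q.IsSymm)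
    (v w : Fin n → ℝ) (hqv : v ⬝ᵥ Q *ᵥ v = 0) (hqw : w ⬝ᵥ Q *ᵥ w = 0)
    (hpv : 0 < v ⬝ᵥ P *ᵥ v) (hpw : w ⬝ᵥ P *ᵥ w < 0)
    (hind : ∀ a b : ℝ, a • v + b • w = 0 → a = 0 ∧ b = 0) :
    ∃ x : Fin n → ℝ, x ≠ 0 ∧ x ⬝ᵥ P *ᵥ x = 0 ∧ x ⬝ᵥ Q *ᵥ x = 0 := by
  set b : ℝ := v ⬝ᵥ Q *ᵥ w with hb
  by_cases hb0 : b = 0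
  · -- Case A
    refine ivt_pair P Q hP hQ w v hqw hqv ?_ hpw hpv ?_
    · rw [dsymm Q hQ w v, ← hb, hb0]
    · intro a b' h
      obtain ⟨h1, h2⟩ := hind b' a (by rw [add_comm]; exact h)
      exact ⟨h2, h1⟩
  · -- Case B : pick u outside the span of v, w
    have hspan : Submodule.span ℝ ({v, w} : Set (Fin n → ℝ)) < ⊤ := by
      apply span_lt_top_of_card_lt_finrank
      have h1 : ({v, w} : Set (Fin n → ℝ)).toFinset.card ≤ 2 := by
        rw [Set.toFinset_insert, Set.toFinset_singleton]
        exact (Finset.card_insert_le _ _).trans (by simp)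
      have h2 : (2:ℕ) < Module.finrank ℝ (Fin n → ℝ) := by
        rw [Module.finrank_fin_fun]; omega
      omega
    obtain ⟨u, -, hu⟩ := SetLike.exists_of_lt hspan
    have htri : ∀ a b' c' : ℝ, a • v + b' • w + c' • u = 0 → a = 0 ∧ b' = 0 ∧ c' = 0 := by
      intro a b' c' h
      by_cases hc : c' = 0
      · subst hc
        simp only [zero_smul, add_zero] at h
        obtain ⟨h1, h2⟩ := hind a b' h
        exact ⟨h1, h2, rfl⟩
      · exfalso
        apply hu
        rw [Submodule.mem_span_pair]
        have hcu : c' • u = (-a) • v + (-b') • w := by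
          linear_combination (norm := module) h
        refine ⟨c'⁻¹ * -a, c'⁻¹ * -b', ?_⟩
        symm
        calc u = c'⁻¹ • (c' • u) := by rw [smul_smul, inv_mul_cancel₀ hc, one_smul]
          _ = (c'⁻¹ * -a) • v + (c'⁻¹ * -b') • w := by rw [hcu]; module
    have hvne : v ≠ 0 := fun h => by
      have := (hind 1 0 (by simp [h])).1; norm_num at this
    have hwne : w ≠ 0 := fun h => by
      have := (hind 0 1 (by simp [h])).2; norm_num at this
    set c : ℝ := v ⬝ᵥ Q *ᵥ u with hc
    set d : ℝ := w ⬝ᵥ Q *ᵥ u with hd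
    set e : ℝ := u ⬝ᵥ Q *ᵥ u with he
    by_cases hdeg : b * e - 2 * c * d = 0
    · -- degenerate case: kernel vector
      have hdet : (Matrix.of ![![0, b, c], ![b, 0, d], ![c, d, e]]).det = 0 := by
        rw [Matrix.det_fin_three]
        simp only [Matrix.of_apply, Matrix.cons_val', Matrix.cons_val_zero, Matrix.cons_val_one,
          Matrix.head_cons, Matrix.empty_val', Matrix.cons_val_fin_one, Matrix.head_fin_const,
          Matrix.cons_val_two, Matrix.tail_cons]
        linear_combination (-b) * hdeg
      obtain ⟨κ, hκne, hκ⟩ := (Matrix.exists_mulVec_eq_zero_iff).2 hdet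
      have h0 : b * κ 1 + c * κ 2 = 0 := by
        have := congrFun hκ 0
        simp [Matrix.mulVec, dotProduct, Fin.sum_univ_three] at this
        linarith [this]
      have h1 : b * κ 0 + d * κ 2 = 0 := by
        have := congrFun hκ 1
        simp [Matrix.mulVec, dotProduct, Fin.sum_univ_three] at this
        linarith [this]
      have h2 : c * κ 0 + d * κ 1 + e * κ 2 = 0 := by
        have := congrFun hκ 2
        simp [Matrix.mulVec, dotProduct, Fin.sum_univ_three] at this
        linarith [this]
      set k : Fin n → ℝ := κ 0 • v + κ 1 • w + κ 2 • u with hk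
      have hkq : k ⬝ᵥ Q *ᵥ k = 0 := by
        rw [hk, q_add3 Q hQ, hqv, hqw, ← hb, ← hc, ← hd, ← he]
        linear_combination (κ 0) * h0 + (κ 1) * h1 + (κ 2) * h2
      have hkv : k ⬝ᵥ Q *ᵥ v = 0 := by
        rw [hk]
        simp only [add_dotProduct, smul_dotProduct, smul_eq_mul]
        rw [dsymm Q hQ w v, dsymm Q hQ u v]
        rw [hqv, ← hb, ← hc]
        linarith [h0]
      have hkw : k ⬝ᵥ Q *ᵥ w = 0 := by
        rw [hk]
        simp only [add_dotProduct, smul_dotProduct, smul_eq_mul]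
        rw [dsymm Q hQ u w, hqw, ← hb, ← hd]
        linarith [h1]
      have hkne : k ≠ 0 := by
        intro h
        obtain ⟨e0, e1, e2⟩ := htri _ _ _ h
        apply hκne
        funext i
        fin_cases i <;> assumption
      rcases lt_trichotomy (k ⬝ᵥ P *ᵥ k) 0 with hpk | hpk | hpk
      · -- p(k) < 0, pair with v
        refine ivt_pair P Q hP hQ k v hkq hqv hkv hpk hpv ?_
        intro a b' h
        have hexp : (a * κ 0 + b') • v + (a * κ 1) • w + (a * κ 2) • u = 0 := by
          rw [← h, hk]; module
        obtain ⟨e0, e1, e2⟩ := htri _ _ _ hexp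
        by_cases ha : a = 0
        · exact ⟨ha, by simpa [ha] using e0⟩
        · exfalso
          have hκ1 : κ 1 = 0 := (mul_eq_zero.1 e1).resolve_left ha
          have hκ2 : κ 2 = 0 := (mul_eq_zero.1 e2).resolve_left ha
          have : k = κ 0 • v := by rw [hk, hκ1, hκ2]; module
          rw [this, q_smul] at hpk
          nlinarith [hpv, sq_nonneg (κ 0)]
      · exact ⟨k, hkne, hpk, hkq⟩
      · -- p(k) > 0, pair with w
        refine ivt_pair P Q hP hQ w k hqw hkq (by rw [dsymm Q hQ w k]; exact hkw) hpw hpk ?_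
        intro a b' h
        have hexp : (b' * κ 0) • v + (a + b' * κ 1) • w + (b' * κ 2) • u = 0 := by
          rw [← h, hk]; module
        obtain ⟨e0, e1, e2⟩ := htri _ _ _ hexp
        by_cases hbz : b' = 0
        · exact ⟨by simpa [hbz] using e1, hbz⟩
        · exfalso
          have hκ0 : κ 0 = 0 := (mul_eq_zero.1 e0).resolve_left hbz
          have hκ2 : κ 2 = 0 := (mul_eq_zero.1 e2).resolve_left hbz
          have : k = κ 1 • w := by rw [hk, hκ0, hκ2]; module
          rw [this, q_smul] at hpk
          nlinarith [hpw, sq_nonneg (κ 1)]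
    · -- nondegenerate case: trig path
      set D : ℝ → ℝ := fun t => 2 * (b * Real.cos t + d * Real.sin t) with hD
      set N : ℝ → ℝ := fun t => -(Real.sin t) * (2 * c * Real.cos t + e * Real.sin t) with hN
      set x : ℝ → (Fin n → ℝ) :=
        fun t => (Real.cos t * D t) • v + N t • w + (Real.sin t * D t) • u with hx
      have hDcont : Continuous D := by
        rw [hD]; fun_prop
      have hNcont : Continuous N := by
        rw [hN]; fun_prop
      have hxcont : Continuous x := by
        rw [hx]
        exact (((Real.continuous_cos.mul hDcont).smul continuous_const).add
          (hNcont.smul continuous_const)).add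
          ((Real.continuous_sin.mul hDcont).smul continuous_const)
      have hqx : ∀ t, x t ⬝ᵥ Q *ᵥ x t = 0 := by
        intro t
        have hxt : x t = (Real.cos t * D t) • v + N t • w + (Real.sin t * D t) • u := by
          rw [hx]
        rw [hxt, q_add3 Q hQ, hqv, hqw, ← hb, ← hc, ← hd, ← he]
        simp only [hD, hN]
        ring
      have hD0 : D 0 = 2 * b := by simp [hD]
      have hDpi : D π = -(2 * b) := by simp [hD]
      have hzero : ∃ t ∈ Set.Icc 0 π, D t = 0 := by
        have hsub := intermediate_value_uIcc (a := (0:ℝ)) (b := π) (f := D) hDcont.continuousOn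
        have h0m : (0:ℝ) ∈ Set.uIcc (D 0) (D π) := by
          rw [hD0, hDpi]
          rcases le_total b 0 with h | h
          · exact Set.mem_uIcc.2 (Or.inl ⟨by linarith, by linarith⟩)
          · exact Set.mem_uIcc.2 (Or.inr ⟨by linarith, by linarith⟩)
        obtain ⟨t, ht, hDt⟩ := hsub h0m
        exact ⟨t, by rwa [Set.uIcc_of_le Real.pi_pos.le] at ht, hDt⟩
      set S : Set ℝ := {t | t ∈ Set.Icc (0:ℝ) π ∧ D t = 0} with hS
      have hSne : S.Nonempty := by obtain ⟨t, ht, h⟩ := hzero; exact ⟨t, ht, h⟩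
      have hSclosed : IsClosed S :=
        IsClosed.inter isClosed_Icc (isClosed_eq hDcont continuous_const)
      have hSbdd : BddBelow S := ⟨0, fun t ht => ht.1.1⟩
      set t₀ := sInf S with ht₀def
      have ht₀S : t₀ ∈ S := hSclosed.csInf_mem hSne hSbdd
      have hDt₀ : D t₀ = 0 := ht₀S.2
      have ht₀pos : 0 < t₀ := by
        rcases lt_or_eq_of_le ht₀S.1.1 with h | h
        · exact h
        · exfalso; apply hb0; rw [← h] at hDt₀; rw [hD0] at hDt₀; linarith
      have ht₀pi : t₀ < π := by
        rcases lt_or_eq_of_le ht₀S.1.2 with h | h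
        · exact h
        · exfalso; apply hb0; rw [h, hDpi] at hDt₀; linarith
      have hsin : 0 < Real.sin t₀ := Real.sin_pos_of_pos_of_lt_pi ht₀pos ht₀pi
      have hlin : b * Real.cos t₀ + d * Real.sin t₀ = 0 := by
        have h := hDt₀
        simp only [hD] at h
        linarith
      have hNt₀ : N t₀ ≠ 0 := by
        have h2 : 2 * c * Real.cos t₀ + e * Real.sin t₀ ≠ 0 := by
          intro hz
          have hcos : Real.cos t₀ * (b * e - 2 * c * d) = 0 := by
            linear_combination e * hlin - d * hz
          have hsin' : Real.sin t₀ * (b * e - 2 * c * d) = 0 := by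
            linear_combination (-(2 * c)) * hlin + b * hz
          have h1' := (mul_eq_zero.1 hcos).resolve_right hdeg
          have h2' := (mul_eq_zero.1 hsin').resolve_right hdeg
          nlinarith [Real.sin_sq_add_cos_sq t₀]
        simp only [hN]
        exact mul_ne_zero (neg_ne_zero.2 (ne_of_gt hsin)) h2
      have hx0 : x 0 = (2 * b) • v := by
        rw [hx]
        simp [hD, hN]
      have hpx0 : 0 < x 0 ⬝ᵥ P *ᵥ x 0 := by
        rw [hx0, q_smul]
        have h2b : (2 * b) ≠ 0 := by intro h; apply hb0; linarith
        exact mul_pos (lt_of_le_of_ne (sq_nonneg _) (Ne.symm (pow_ne_zero 2 h2b))) hpv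
      have hxt₀ : x t₀ = N t₀ • w := by
        rw [hx]
        simp [hDt₀]
      have hpxt₀ : x t₀ ⬝ᵥ P *ᵥ x t₀ < 0 := by
        rw [hxt₀, q_smul]
        exact mul_neg_of_pos_of_neg
          (lt_of_le_of_ne (sq_nonneg _) (Ne.symm (pow_ne_zero 2 hNt₀))) hpw
      have hcont2 : ContinuousOn (fun t => x t ⬝ᵥ P *ᵥ x t) (Set.Icc 0 t₀) :=
        ((contq P).comp hxcont).continuousOn
      obtain ⟨t₁, ht₁mem, ht₁⟩ := intermediate_value_Icc' (le_of_lt ht₀pos) hcont2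
        ⟨le_of_lt hpxt₀, le_of_lt hpx0⟩
      refine ⟨x t₁, ?_, ht₁, hqx t₁⟩
      intro hz
      have hxt1 : (Real.cos t₁ * D t₁) • v + N t₁ • w + (Real.sin t₁ * D t₁) • u = 0 := by
        rw [← hz, hx]
      obtain ⟨e0, e1, e2⟩ := htri _ _ _ hxt1
      by_cases hDt₁ : D t₁ = 0
      · have ht₁S : t₁ ∈ S := ⟨⟨ht₁mem.1, le_trans ht₁mem.2 (le_of_lt ht₀pi)⟩, hDt₁⟩
        have hle : t₀ ≤ t₁ := csInf_le hSbdd ht₁S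
        have ht₁eq : t₁ = t₀ := le_antisymm ht₁mem.2 hle
        rw [ht₁eq] at e1
        exact hNt₀ e1
      · have hcos0 : Real.cos t₁ = 0 := (mul_eq_zero.1 e0).resolve_right hDt₁
        have hsin0 : Real.sin t₁ = 0 := (mul_eq_zero.1 e2).resolve_right hDt₁
        nlinarith [Real.sin_sq_add_cos_sq t₁]


lemma dot_self_nonneg (x : Fin n → ℝ) : 0 ≤ x ⬝ᵥ x :=
  Finset.sum_nonneg fun i _ => mul_self_nonneg _

lemma dot_self_smul (a : ℝ) (x : Fin n → ℝ) : (a • x) ⬝ᵥ (a • x) = a^2 * (x ⬝ᵥ x) := by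
  simp [smul_dotProduct, dotProduct_smul, smul_eq_mul]; ring

lemma key (hn : 3 ≤ n) (Q₁ Q₂ : Matrix (Fin n) (Fin n) ℝ) (hQ₁ : Q₁.IsSymm) (hQ₂ : Q₂.IsSymm)
    (v w : Fin n → ℝ) :
    ∃ x : Fin n → ℝ, x ⬝ᵥ x = v ⬝ᵥ v + w ⬝ᵥ w ∧
      x ⬝ᵥ Q₁ *ᵥ x = v ⬝ᵥ Q₁ *ᵥ v + w ⬝ᵥ Q₁ *ᵥ w ∧
      x ⬝ᵥ Q₂ *ᵥ x = v ⬝ᵥ Q₂ *ᵥ v + w ⬝ᵥ Q₂ *ᵥ w := by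
  by_cases hv0 : v = 0
  · exact ⟨w, by simp [hv0], by simp [hv0], by simp [hv0]⟩
  by_cases hw0 : w = 0
  · exact ⟨v, by simp [hw0], by simp [hw0], by simp [hw0]⟩
  have ha : 0 < v ⬝ᵥ v :=
    lt_of_le_of_ne (dot_self_nonneg v) (fun h => hv0 (dotProduct_self_eq_zero.1 h.symm))
  have hbb : 0 < w ⬝ᵥ w :=
    lt_of_le_of_ne (dot_self_nonneg w) (fun h => hw0 (dotProduct_self_eq_zero.1 h.symm))
  set s : ℝ := v ⬝ᵥ v + w ⬝ᵥ w with hs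
  have hspos : 0 < s := by positivity
  set α : ℝ := (v ⬝ᵥ Q₁ *ᵥ v + w ⬝ᵥ Q₁ *ᵥ w) / s with hα
  set β : ℝ := (v ⬝ᵥ Q₂ *ᵥ v + w ⬝ᵥ Q₂ *ᵥ w) / s with hβ
  set P : Matrix (Fin n) (Fin n) ℝ := Q₁ - α • (1 : Matrix (Fin n) (Fin n) ℝ) with hP
  set Q : Matrix (Fin n) (Fin n) ℝ := Q₂ - β • (1 : Matrix (Fin n) (Fin n) ℝ) with hQ
  have hPsymm : P.IsSymm := hQ₁.sub (isSymm_one.smul α)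
  have hQsymm : Q.IsSymm := hQ₂.sub (isSymm_one.smul β)
  have hp : ∀ x : Fin n → ℝ, x ⬝ᵥ P *ᵥ x = x ⬝ᵥ Q₁ *ᵥ x - α * (x ⬝ᵥ x) := by
    intro x
    simp [hP, Matrix.sub_mulVec, Matrix.smul_mulVec, Matrix.one_mulVec,
      dotProduct_sub, dotProduct_smul, smul_eq_mul]
  have hq : ∀ x : Fin n → ℝ, x ⬝ᵥ Q *ᵥ x = x ⬝ᵥ Q₂ *ᵥ x - β * (x ⬝ᵥ x) := by
    intro x
    simp [hQ, Matrix.sub_mulVec, Matrix.smul_mulVec, Matrix.one_mulVec,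
      dotProduct_sub, dotProduct_smul, smul_eq_mul]
  have hsum_p : v ⬝ᵥ P *ᵥ v + w ⬝ᵥ P *ᵥ w = 0 := by
    rw [hp, hp, hα]; field_simp; ring
  have hsum_q : v ⬝ᵥ Q *ᵥ v + w ⬝ᵥ Q *ᵥ w = 0 := by
    rw [hq, hq, hβ]; field_simp; ring
  -- helper to produce x from a vector y ≠ 0 with p y = 0, q y = 0
  have final : ∀ y : Fin n → ℝ, y ≠ 0 → y ⬝ᵥ P *ᵥ y = 0 → y ⬝ᵥ Q *ᵥ y = 0 →
      ∃ x : Fin n → ℝ, x ⬝ᵥ x = v ⬝ᵥ v + w ⬝ᵥ w ∧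
        x ⬝ᵥ Q₁ *ᵥ x = v ⬝ᵥ Q₁ *ᵥ v + w ⬝ᵥ Q₁ *ᵥ w ∧
        x ⬝ᵥ Q₂ *ᵥ x = v ⬝ᵥ Q₂ *ᵥ v + w ⬝ᵥ Q₂ *ᵥ w := by
    intro y hy0 hpy hqy
    have hay : 0 < y ⬝ᵥ y :=
      lt_of_le_of_ne (dot_self_nonneg y) (fun h => hy0 (dotProduct_self_eq_zero.1 h.symm))
    set c : ℝ := Real.sqrt (s / (y ⬝ᵥ y)) with hcdef
    have hc2 : c^2 = s / (y ⬝ᵥ y) := Real.sq_sqrt (by positivity)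
    refine ⟨c • y, ?_, ?_, ?_⟩
    · rw [dot_self_smul, hc2]; field_simp; exact hs
    · rw [q_smul, hc2]
      rw [hp y] at hpy
      have hq1y : y ⬝ᵥ Q₁ *ᵥ y = α * (y ⬝ᵥ y) := by linarith
      rw [hq1y, hα]
      field_simp
    · rw [q_smul, hc2]
      rw [hq y] at hqy
      have hq2y : y ⬝ᵥ Q₂ *ᵥ y = β * (y ⬝ᵥ y) := by linarith
      rw [hq2y, hβ]
      field_simp
  by_cases hcase : v ⬝ᵥ P *ᵥ v = 0 ∧ v ⬝ᵥ Q *ᵥ v = 0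
  · exact final v hv0 hcase.1 hcase.2
  · set r1 : ℝ := v ⬝ᵥ P *ᵥ v with hr1
    set r2 : ℝ := v ⬝ᵥ Q *ᵥ v with hr2
    have hr : 0 < r1^2 + r2^2 := by
      rcases not_and_or.1 hcase with h | h
      · have : r1 ≠ 0 := h
        positivity
      · have : r2 ≠ 0 := h
        positivity
    set P' : Matrix (Fin n) (Fin n) ℝ := r1 • P + r2 • Q with hP'
    set Q' : Matrix (Fin n) (Fin n) ℝ := r2 • P - r1 • Q with hQ'
    have hP'symm : P'.IsSymm := (hPsymm.smul r1).add (hQsymm.smul r2)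
    have hQ'symm : Q'.IsSymm := (hPsymm.smul r2).sub (hQsymm.smul r1)
    have hp' : ∀ x : Fin n → ℝ, x ⬝ᵥ P' *ᵥ x = r1 * (x ⬝ᵥ P *ᵥ x) + r2 * (x ⬝ᵥ Q *ᵥ x) := by
      intro x
      simp [hP', Matrix.add_mulVec, Matrix.smul_mulVec, dotProduct_add,
        dotProduct_smul, smul_eq_mul]
    have hq' : ∀ x : Fin n → ℝ, x ⬝ᵥ Q' *ᵥ x = r2 * (x ⬝ᵥ P *ᵥ x) - r1 * (x ⬝ᵥ Q *ᵥ x) := by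
      intro x
      simp [hQ', Matrix.sub_mulVec, Matrix.smul_mulVec, dotProduct_sub,
        dotProduct_smul, smul_eq_mul]
    have hpv' : 0 < v ⬝ᵥ P' *ᵥ v := by rw [hp']; rw [← hr1, ← hr2]; nlinarith [hr]
    have hpw' : w ⬝ᵥ P' *ᵥ w < 0 := by
      rw [hp']
      have h1 : w ⬝ᵥ P *ᵥ w = -r1 := by rw [hr1]; linarith
      have h2 : w ⬝ᵥ Q *ᵥ w = -r2 := by rw [hr2]; linarith
      rw [h1, h2]; nlinarith [hr]
    have hqv' : v ⬝ᵥ Q' *ᵥ v = 0 := by rw [hq', ← hr1, ← hr2]; ring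
    have hqw' : w ⬝ᵥ Q' *ᵥ w = 0 := by
      rw [hq']
      have h1 : w ⬝ᵥ P *ᵥ w = -r1 := by rw [hr1]; linarith
      have h2 : w ⬝ᵥ Q *ᵥ w = -r2 := by rw [hr2]; linarith
      rw [h1, h2]; ring
    have hind : ∀ a b : ℝ, a • v + b • w = 0 → a = 0 ∧ b = 0 := by
      intro a b h
      by_cases hbz : b = 0
      · subst hbz
        simp only [zero_smul, add_zero] at h
        rcases smul_eq_zero.1 h with h' | h'
        · exact ⟨h', rfl⟩
        · exact absurd h' hv0
      · exfalso
        have hw : w = (-(a/b)) • v := by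
          have hbw : b • w = (-a) • v := by linear_combination (norm := module) h
          calc w = b⁻¹ • (b • w) := by rw [smul_smul, inv_mul_cancel₀ hbz, one_smul]
            _ = (-(a/b)) • v := by rw [hbw, smul_smul]; congr 1; field_simp
        have hpw2 : w ⬝ᵥ P *ᵥ w = (a/b)^2 * r1 := by rw [hw, q_smul, ← hr1]; ring_nf
        have hqw2 : w ⬝ᵥ Q *ᵥ w = (a/b)^2 * r2 := by rw [hw, q_smul, ← hr2]; ring_nf
        have hr1z : r1 = 0 := by nlinarith [sq_nonneg (a/b), hsum_p, hpw2]
        have hr2z : r2 = 0 := by nlinarith [sq_nonneg (a/b), hsum_q, hqw2]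
        rw [hr1z, hr2z] at hr; norm_num at hr
    obtain ⟨y, hy0, hpy', hqy'⟩ := crux hn P' Q' hP'symm hQ'symm v w hqv' hqw' hpv' hpw' hind
    rw [hp' y] at hpy'
    rw [hq' y] at hqy'
    have hrne : r1^2 + r2^2 ≠ 0 := ne_of_gt hr
    have hpy : y ⬝ᵥ P *ᵥ y = 0 := by
      have hcomb : (r1^2 + r2^2) * (y ⬝ᵥ P *ᵥ y) = 0 := by
        linear_combination r1 * hpy' + r2 * hqy'
      exact (mul_eq_zero.1 hcomb).resolve_left hrne
    have hqy : y ⬝ᵥ Q *ᵥ y = 0 := by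
      have hcomb : (r1^2 + r2^2) * (y ⬝ᵥ Q *ᵥ y) = 0 := by
        linear_combination r2 * hpy' - r1 * hqy'
      exact (mul_eq_zero.1 hcomb).resolve_left hrne
    exact final y hy0 hpy hqy

lemma key_sum (hn : 3 ≤ n) (Q₁ Q₂ : Matrix (Fin n) (Fin n) ℝ)
    (hQ₁ : Q₁.IsSymm) (hQ₂ : Q₂.IsSymm) {ι : Type*} (s : Finset ι) (f : ι → Fin n → ℝ) :
    ∃ x : Fin n → ℝ, x ⬝ᵥ x = ∑ i ∈ s, (f i ⬝ᵥ f i) ∧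
      x ⬝ᵥ Q₁ *ᵥ x = ∑ i ∈ s, (f i ⬝ᵥ Q₁ *ᵥ f i) ∧
      x ⬝ᵥ Q₂ *ᵥ x = ∑ i ∈ s, (f i ⬝ᵥ Q₂ *ᵥ f i) := by
  classical
  induction s using Finset.cons_induction with
  | empty => exact ⟨0, by simp, by simp, by simp⟩
  | cons i s his ih =>
    obtain ⟨x, h1, h2, h3⟩ := ih
    obtain ⟨z, g1, g2, g3⟩ := key hn Q₁ Q₂ hQ₁ hQ₂ (f i) x
    exact ⟨z, by rw [g1, h1, Finset.sum_cons], by rw [g2, h2, Finset.sum_cons],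
      by rw [g3, h3, Finset.sum_cons]⟩

lemma tr1 (B : Matrix (Fin n) (Fin n) ℝ) :
    (Bᴴ * B).trace = ∑ i, ((fun j => B i j) ⬝ᵥ (fun j => B i j)) := by
  simp only [Matrix.trace, Matrix.diag, Matrix.mul_apply, Matrix.conjTranspose_apply,
    star_trivial, dotProduct]
  rw [Finset.sum_comm]

lemma tr2 (Q B : Matrix (Fin n) (Fin n) ℝ) :
    (Q * (Bᴴ * B)).trace = ∑ i, ((fun j => B i j) ⬝ᵥ Q *ᵥ (fun j => B i j)) := by
  rw [← Matrix.mul_assoc, Matrix.trace_mul_cycle]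
  simp only [Matrix.trace, Matrix.diag, Matrix.mul_apply, Matrix.conjTranspose_apply,
    star_trivial, dotProduct, Matrix.mulVec, Finset.mul_sum, Finset.sum_mul]
  apply Finset.sum_congr rfl
  intro i _
  rw [Finset.sum_comm]
  apply Finset.sum_congr rfl
  intro j _
  apply Finset.sum_congr rfl
  intro k _
  ring

lemma trv1 (x : Fin n → ℝ) : (vecMulVec x x).trace = x ⬝ᵥ x := by
  simp [Matrix.trace, Matrix.diag, vecMulVec_apply, dotProduct]

lemma trv2 (Q : Matrix (Fin n) (Fin n) ℝ) (x : Fin n → ℝ) :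
    (Q * vecMulVec x x).trace = x ⬝ᵥ Q *ᵥ x := by
  simp only [Matrix.trace, Matrix.diag, Matrix.mul_apply, vecMulVec_apply, dotProduct,
    Matrix.mulVec, Finset.mul_sum]
  apply Finset.sum_congr rfl
  intro j _
  apply Finset.sum_congr rfl
  intro k _
  ring

lemma vmv_symm (x : Fin n → ℝ) : (vecMulVec x x).IsSymm := by
  ext i j
  simp [Matrix.transpose_apply, vecMulVec_apply, mul_comm]

lemma vmv_psd (x : Fin n → ℝ) : (vecMulVec x x).PosSemidef := by
  refine posSemidef_iff_dotProduct_mulVec.mpr ?_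
  constructor
  · ext i j
    simp [Matrix.conjTranspose_apply, vecMulVec_apply, mul_comm]
  · intro y
    have h : star y ⬝ᵥ (vecMulVec x x) *ᵥ y = (∑ i, x i * y i) * (∑ j, x j * y j) := by
      rw [Finset.sum_mul_sum]
      simp only [star_trivial, dotProduct, Matrix.mulVec, vecMulVec_apply, Finset.mul_sum]
      apply Finset.sum_congr rfl
      intro i _
      apply Finset.sum_congr rfl
      intro j _
      ring
    rw [h]
    exact mul_self_nonneg _

lemma psd_fact (X : Matrix (Fin n) (Fin n) ℝ) (h : X.PosSemidef) :
    ∃ B : Matrix (Fin n) (Fin n) ℝ, X = Bᴴ * B := by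
  open scoped MatrixOrder in
  exact ⟨CFC.sqrt X, by
    rw [(Matrix.nonneg_iff_posSemidef.mp (CFC.sqrt_nonneg X)).1.eq,
      CFC.sqrt_mul_sqrt_self X (Matrix.nonneg_iff_posSemidef.mpr h)]⟩

end BrickmanAux

/-- For `n ≥ 3` and real symmetric `Q₁, Q₂`, the homogenized Brickman
set `H(Q₁,Q₂) = {(xᵀx, xᵀQ₁x, xᵀQ₂x) : x ∈ ℝⁿ} ⊆ ℝ³` is a convex cone (closed under
addition and under multiplication by nonnegative scalars), and it has the SDP
representation `H(Q₁,Q₂) = {(Tr X, Tr(Q₁X), Tr(Q₂X)) : X ⪰ 0}`. -/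
theorem brickman_cone_sdp {n : ℕ} (hn : 3 ≤ n)
    (Q₁ Q₂ : Matrix (Fin n) (Fin n) ℝ) (hQ₁ : Q₁.IsSymm) (hQ₂ : Q₂.IsSymm) :
    (∀ p ∈ {p : ℝ × ℝ × ℝ | ∃ x : Fin n → ℝ,
        p = (x ⬝ᵥ x, x ⬝ᵥ Q₁.mulVec x, x ⬝ᵥ Q₂.mulVec x)},
      ∀ q ∈ {p : ℝ × ℝ × ℝ | ∃ x : Fin n → ℝ,
        p = (x ⬝ᵥ x, x ⬝ᵥ Q₁.mulVec x, x ⬝ᵥ Q₂.mulVec x)},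
      p + q ∈ {p : ℝ × ℝ × ℝ | ∃ x : Fin n → ℝ,
        p = (x ⬝ᵥ x, x ⬝ᵥ Q₁.mulVec x, x ⬝ᵥ Q₂.mulVec x)}) ∧
    (∀ t : ℝ, 0 ≤ t →
      ∀ p ∈ {p : ℝ × ℝ × ℝ | ∃ x : Fin n → ℝ,
        p = (x ⬝ᵥ x, x ⬝ᵥ Q₁.mulVec x, x ⬝ᵥ Q₂.mulVec x)},
      t • p ∈ {p : ℝ × ℝ × ℝ | ∃ x : Fin n → ℝ,
        p = (x ⬝ᵥ x, x ⬝ᵥ Q₁.mulVec x, x ⬝ᵥ Q₂.mulVec x)}) ∧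
    {p : ℝ × ℝ × ℝ | ∃ x : Fin n → ℝ,
        p = (x ⬝ᵥ x, x ⬝ᵥ Q₁.mulVec x, x ⬝ᵥ Q₂.mulVec x)} =
      {p : ℝ × ℝ × ℝ | ∃ X : Matrix (Fin n) (Fin n) ℝ, X.IsSymm ∧ X.PosSemidef ∧
        p = (X.trace, (Q₁ * X).trace, (Q₂ * X).trace)} := by
  refine ⟨?_, ?_, ?_⟩
  · rintro p ⟨x, rfl⟩ q ⟨y, rfl⟩
    obtain ⟨z, h1, h2, h3⟩ := key hn Q₁ Q₂ hQ₁ hQ₂ x y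
    exact ⟨z, by simp [Prod.ext_iff, h1, h2, h3]⟩
  · rintro t ht p ⟨x, rfl⟩
    refine ⟨Real.sqrt t • x, ?_⟩
    have hsq : (Real.sqrt t)^2 = t := Real.sq_sqrt ht
    simp only [Prod.smul_def, smul_eq_mul, Prod.ext_iff]
    rw [dot_self_smul, q_smul, q_smul, hsq]
    exact ⟨rfl, rfl, rfl⟩
  · ext p
    simp only [Set.mem_setOf_eq]
    constructor
    · rintro ⟨x, rfl⟩
      exact ⟨vecMulVec x x, vmv_symm x, vmv_psd x,
        by rw [trv1, trv2, trv2]⟩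
    · rintro ⟨X, hXs, hXpsd, rfl⟩
      obtain ⟨B, rfl⟩ := psd_fact _ hXpsd
      obtain ⟨x, h1, h2, h3⟩ := key_sum hn Q₁ Q₂ hQ₁ hQ₂ Finset.univ (fun i => fun j => B i j)
      refine ⟨x, ?_⟩
      simp only [Prod.ext_iff]
      rw [tr1, tr2, tr2, h1, h2, h3]
      exact ⟨rfl, rfl, rfl⟩
end

section
/- Let f, c_1,…,c_m : ℝⁿ → ℝ be differentiable with ∇f L-Lipschitz and each ∇c_i L_i-Lipschitz (L, L_i > 0), let r : ℝⁿ → ℝ be convex, and let μ > 0. Let x ∈ ℝⁿ be strictly feasible (c_i(x) < 0 for all i), define D := {z ∈ ℝⁿ : c_i(x) + ∇c_i(x)ᵀ(z − x) + (L_i/2)‖z − x‖² < 0 for all i} (so x ∈ D), and suppose x⁺ attains the minimum over D of φ(z) := ∇f(x)ᵀ(z − x) + L‖z − x‖² + μ·B̃(z) + r(z), where B̃(z) := −Σ_{i=1}^m ln(−c_i(x) − ∇c_i(x)ᵀ(z − x) − (L_i/2)‖z − x‖²). Then c_i(x⁺) < 0 for all i, and F_μ(x⁺) ≤ F_μ(x)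 − (L/2)‖x⁺ − x‖², where F_μ(z) := f(z) + r(z) − μΣ_{i=1}^m ln(−c_i(z)) on the strictly feasible set. -/
open scoped RealInnerProductSpace
open Real Set

lemma ceb_descent_lemma {n : ℕ} (f : EuclideanSpace ℝ (Fin n) → ℝ)
    (f' : EuclideanSpace ℝ (Fin n) → EuclideanSpace ℝ (Fin n))
    (hf : ∀ x, HasGradientAt f (f' x) x)
    (L : ℝ) (hL : 0 ≤ L)
    (hlip : ∀ x y, ‖f' x - f' y‖ ≤ L * ‖x - y‖)
    (x y : EuclideanSpace ℝ (Fin n)) :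
    f y ≤ f x + ⟪f' x, y - x⟫ + L / 2 * ‖y - x‖ ^ 2 := by
  set v := y - x with hv
  have hcont : Continuous f' := by
    have : LipschitzWith (Real.toNNReal L) f' := by
      apply LipschitzWith.of_dist_le_mul
      intro a b
      rw [dist_eq_norm, dist_eq_norm, Real.coe_toNNReal L hL]
      exact hlip a b
    exact this.continuous
  set g' : ℝ → ℝ := fun t => ⟪f' (x + t • v), v⟫ with hg'
  have hg : ∀ t : ℝ, HasDerivAt (fun t => f (x + t • v)) (g' t) t := by
    intro t
    have hline : HasDerivAt (fun t : ℝ => x + t • v) v t := by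
      simpa using ((hasDerivAt_id t).smul_const v).const_add x
    have := (hf (x + t • v)).hasFDerivAt.comp_hasDerivAt t hline
    simp [hg', InnerProductSpace.toDual] at this
    exact this
  have hgc : Continuous g' := by
    apply Continuous.inner
    · exact hcont.comp (continuous_const.add (continuous_id.smul continuous_const))
    · exact continuous_const
  have hint : f (x + (1:ℝ) • v) - f (x + (0:ℝ) • v) = ∫ t in (0:ℝ)..1, g' t := by
    rw [intervalIntegral.integral_eq_sub_of_hasDerivAt (fun t _ => hg t)
      (hgc.intervalIntegrable 0 1)]
  have key : (∫ t in (0:ℝ)..1, g' t) ≤ ∫ t in (0:ℝ)..1, (⟪f' x, v⟫ + (L * ‖v‖ ^ 2) * t) := by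
    apply intervalIntegral.integral_mono_on zero_le_one (hgc.intervalIntegrable 0 1)
    · exact (Continuous.intervalIntegrable (by continuity) 0 1)
    · intro t ht
      rcases ht with ⟨ht0, ht1⟩
      have h1 : g' t - ⟪f' x, v⟫ = ⟪f' (x + t • v) - f' x, v⟫ := by
        rw [inner_sub_left]
      have h2 : ⟪f' (x + t • v) - f' x, v⟫ ≤ ‖f' (x + t • v) - f' x‖ * ‖v‖ :=
        real_inner_le_norm _ _
      have h3 : ‖f' (x + t • v) - f' x‖ ≤ L * (t * ‖v‖) := by
        have := hlip (x + t • v) x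
        simpa [norm_smul, abs_of_nonneg ht0] using this
      nlinarith [norm_nonneg v, mul_le_mul_of_nonneg_right h3 (norm_nonneg v)]
  have hconst : (∫ t in (0:ℝ)..1, (⟪f' x, v⟫ + (L * ‖v‖ ^ 2) * t))
      = ⟪f' x, v⟫ + L / 2 * ‖v‖ ^ 2 := by
    rw [intervalIntegral.integral_add (intervalIntegrable_const)
      ((intervalIntegral.intervalIntegrable_id).const_mul _)]
    rw [intervalIntegral.integral_const_mul, integral_id, intervalIntegral.integral_const, smul_eq_mul]
    ring
  have h0 : x + (0:ℝ) • v = x := by simp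
  have h1 : x + (1:ℝ) • v = y := by simp [hv]
  rw [h0, h1] at hint
  linarith [hint, key, hconst.le, hconst.ge]


/-- (One step of Algorithm CEB.)  Minimizing the linearized objective
plus proximal term plus the log-barrier of the quadratic surrogate constraints over the
surrogate-feasible region preserves strict feasibility and decreases the barrier
function `F_μ(z) = f(z) + r(z) − μΣᵢ ln(−cᵢ(z))` by at least `(L/2)‖x⁺ − x‖²`. -/
theorem ceb_descent_step {n m : ℕ}
    (f r : EuclideanSpace ℝ (Fin n) → ℝ)
    (c : Fin m → EuclideanSpace ℝ (Fin n) → ℝ)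
    (f' : EuclideanSpace ℝ (Fin n) → EuclideanSpace ℝ (Fin n))
    (c' : Fin m → EuclideanSpace ℝ (Fin n) → EuclideanSpace ℝ (Fin n))
    (hf : ∀ x, HasGradientAt f (f' x) x)
    (hc : ∀ i x, HasGradientAt (c i) (c' i x) x)
    (L : ℝ) (Li : Fin m → ℝ) (hL : 0 < L) (hLi : ∀ i, 0 < Li i)
    (hflip : ∀ x y, ‖f' x - f' y‖ ≤ L * ‖x - y‖)
    (hclip : ∀ i x y, ‖c' i x - c' i y‖ ≤ Li i * ‖x - y‖)
    (hrconv : ConvexOn ℝ univ r)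
    (μ : ℝ) (hμ : 0 < μ)
    -- the strictly feasible base point
    (x : EuclideanSpace ℝ (Fin n)) (hx : ∀ i, c i x < 0)
    -- `x⁺` minimizes φ over the (open) surrogate-feasible region D
    (xp : EuclideanSpace ℝ (Fin n))
    (hxpD : ∀ i, c i x + ⟪c' i x, xp - x⟫ + (Li i / 2) * ‖xp - x‖ ^ 2 < 0)
    (hxpmin : ∀ z, (∀ i, c i x + ⟪c' i x, z - x⟫ + (Li i / 2) * ‖z - x‖ ^ 2 < 0) →
      ⟪f' x, xp - x⟫ + L * ‖xp - x‖ ^ 2 -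
          μ * ∑ i, Real.log (-(c i x) - ⟪c' i x, xp - x⟫ - (Li i / 2) * ‖xp - x‖ ^ 2) +
          r xp ≤
        ⟪f' x, z - x⟫ + L * ‖z - x‖ ^ 2 -
          μ * ∑ i, Real.log (-(c i x) - ⟪c' i x, z - x⟫ - (Li i / 2) * ‖z - x‖ ^ 2) +
          r z) :
    (∀ i, c i xp < 0) ∧
    f xp + r xp - μ * ∑ i, Real.log (-(c i xp)) ≤
      f x + r x - μ * ∑ i, Real.log (-(c i x)) - (L / 2) * ‖xp - x‖ ^ 2 := by
  have hsur : ∀ i, c i xp ≤ c i x + ⟪c' i x, xp - x⟫ + (Li i / 2) * ‖xp - x‖ ^ 2 := by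
    intro i
    have := ceb_descent_lemma (c i) (c' i) (hc i) (Li i) (hLi i).le (hclip i) x xp
    linarith
  have hfeas : ∀ i, c i xp < 0 := fun i => lt_of_le_of_lt (hsur i) (hxpD i)
  refine ⟨hfeas, ?_⟩
  have hxfeas : ∀ i, c i x + ⟪c' i x, x - x⟫ + (Li i / 2) * ‖x - x‖ ^ 2 < 0 := by
    intro i
    simpa using hx i
  have hmin := hxpmin x hxfeas
  simp only [sub_self, inner_zero_right, norm_zero, ne_eq, OfNat.ofNat_ne_zero,
    not_false_eq_true, zero_pow, mul_zero, sub_zero, zero_add, add_zero] at hmin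
  have hdesc := ceb_descent_lemma f f' hf L hL.le hflip x xp
  have hsum : (∑ i, Real.log (-(c i x) - ⟪c' i x, xp - x⟫ - (Li i / 2) * ‖xp - x‖ ^ 2))
      ≤ ∑ i, Real.log (-(c i xp)) := by
    apply Finset.sum_le_sum
    intro i _
    have h1 : (0:ℝ) < -(c i x) - ⟪c' i x, xp - x⟫ - (Li i / 2) * ‖xp - x‖ ^ 2 := by
      linarith [hxpD i]
    exact Real.log_le_log h1 (by linarith [hsur i])
  have hmul : μ * (∑ i, Real.log (-(c i x) - ⟪c' i x, xp - x⟫ - (Li i / 2) * ‖xp - x‖ ^ 2))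
      ≤ μ * ∑ i, Real.log (-(c i xp)) := mul_le_mul_of_nonneg_left hsum hμ.le
  linarith
end

section
/- Let f, c_1,…,c_m : ℝⁿ → ℝ be differentiable with ∇f L-Lipschitz and each ∇c_i L_i-Lipschitz, and let μ > 0. Let x⁰ be strictly feasible, suppose F_μ(z) := f(z) − μΣ_{i=1}^m ln(−c_i(z)) satisfies F_μ ≥ F* on the strictly feasible set for some F* ∈ ℝ, and let (x^k)_{k≥0} be generated by Algorithm CEB with r ≡ 0: x^{k+1} attains the minimum over D_k := {z : c_i(x^k) + ∇c_i(x^k)ᵀ(z − x^k) + (L_i/2)‖z − x^k‖² < 0 ∀i} of z ↦ ∇f(x^k)ᵀ(z − x^k) + L‖z − x^k‖² + μ·B̃_k(z), where B̃_k(z) := −Σ_i ln(−c_i(x^k) − ∇c_i(x^k)ᵀ(z − x^k) − (L_i/2)‖z − x^k‖²). For each k set d^k := x^{k+1} − x^k and λ^k_i := −μ/(c_i(x^k) + ∇c_i(x^k)ᵀd^k + (L_i/2)‖d^k‖²). Then λ^k_i > 0, the stationarity identity ∇f(x^k) + 2L·d^k + Σ_{i=1}^m λ^k_i(∇c_i(x^k)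 + L_i·d^k) = 0 holds, and if ‖λ^k‖_∞ ≤ B for all 0 ≤ k ≤ K−1, then min_{0≤k≤K−1} ‖∇f(x^k) + Σ_{i=1}^m λ^k_i ∇c_i(x^k)‖ ≤ (2L + B·Σ_{i=1}^m L_i)·(2(F_μ(x⁰) − F*)/(L·K))^{1/2}. -/
open scoped RealInnerProductSpace
open Real Set

section Aux

variable {E : Type*} [NormedAddCommGroup E] [InnerProductSpace ℝ E] [CompleteSpace E]

private lemma hga_add {f g : E → ℝ} {fg gg p : E} (hf : HasGradientAt f fg p)
    (hg : HasGradientAt g gg p) : HasGradientAt (fun z => f z + g z) (fg + gg) p := by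
  rw [hasGradientAt_iff_hasFDerivAt] at *
  simpa [map_add] using hf.fun_add hg

private lemma hga_sub {f g : E → ℝ} {fg gg p : E} (hf : HasGradientAt f fg p)
    (hg : HasGradientAt g gg p) : HasGradientAt (fun z => f z - g z) (fg - gg) p := by
  rw [hasGradientAt_iff_hasFDerivAt] at *
  simpa [map_sub] using hf.fun_sub hg

private lemma hga_const_add {f : E → ℝ} {fg p : E} (b : ℝ) (hf : HasGradientAt f fg p) :
    HasGradientAt (fun z => b + f z) fg p := by
  rw [hasGradientAt_iff_hasFDerivAt] at *
  simpa using (hasFDerivAt_const b p).fun_add hf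

private lemma hga_const_mul {f : E → ℝ} {fg p : E} (a : ℝ) (hf : HasGradientAt f fg p) :
    HasGradientAt (fun z => a * f z) (a • fg) p := by
  rw [hasGradientAt_iff_hasFDerivAt] at *
  simpa using hf.const_mul a

private lemma hga_sum {ι : Type*} (s : Finset ι) {f : ι → E → ℝ} {fg : ι → E} {p : E}
    (hf : ∀ i ∈ s, HasGradientAt (f i) (fg i) p) :
    HasGradientAt (fun z => ∑ i ∈ s, f i z) (∑ i ∈ s, fg i) p := by
  rw [hasGradientAt_iff_hasFDerivAt]
  simpa [map_sum] using HasFDerivAt.fun_sum (fun i hi => hasGradientAt_iff_hasFDerivAt.1 (hf i hi))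

private lemma hga_log {u : E → ℝ} {ug p : E} (hu : HasGradientAt u ug p) (h : u p ≠ 0) :
    HasGradientAt (fun z => Real.log (u z)) ((u p)⁻¹ • ug) p := by
  rw [hasGradientAt_iff_hasFDerivAt] at *
  simpa [Function.comp_def] using (Real.hasDerivAt_log h).comp_hasFDerivAt p hu

private lemma hga_quad (w x0 p : E) (s : ℝ) :
    HasGradientAt (fun z : E => ⟪w, z - x0⟫ + s * ‖z - x0‖ ^ 2)
      (w + (2 * s) • (p - x0)) p := by
  rw [hasGradientAt_iff_isLittleO]
  have key : (fun z : E => (⟪w, z - x0⟫ + s * ‖z - x0‖ ^ 2) -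
      (⟪w, p - x0⟫ + s * ‖p - x0‖ ^ 2) - ⟪w + (2 * s) • (p - x0), z - p⟫)
      = fun z => s * ‖z - p‖ ^ 2 := by
    funext z
    have h1 : z - x0 = (z - p) + (p - x0) := by abel
    simp only [h1, ← @real_inner_self_eq_norm_sq, inner_add_left, inner_add_right,
      inner_smul_left, RCLike.conj_to_real, real_inner_comm (p - x0) (z - p)]
    ring
  rw [key]
  have h1 : (fun z : E => s * ‖z - p‖) =o[nhds p] (fun _ : E => (1:ℝ)) := by
    rw [Asymptotics.isLittleO_one_iff]
    have : Continuous fun z : E => s * ‖z - p‖ := by continuity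
    simpa using this.tendsto p
  have h2 := h1.mul_isBigO (Asymptotics.isBigO_refl (fun z : E => ‖z - p‖) (nhds p))
  have h3 : (fun z : E => s * ‖z - p‖ ^ 2) =o[nhds p] fun z : E => ‖z - p‖ := by
    simpa [pow_two, mul_assoc] using h2
  exact h3.trans_isBigO (Asymptotics.isBigO_refl _ _).norm_left

private lemma line_hasDerivAt {g : E → ℝ} {G : E → E} (hg : ∀ p, HasGradientAt g (G p) p)
    (x d : E) (t : ℝ) :
    HasDerivAt (fun t : ℝ => g (x + t • d)) ⟪G (x + t • d), d⟫ t := by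
  have hline : HasDerivAt (fun t : ℝ => x + t • d) d t := by
    simpa using ((hasDerivAt_id t).smul_const d).const_add x
  have hfd := hasGradientAt_iff_hasFDerivAt.1 (hg (x + t • d))
  simpa [Function.comp_def] using hfd.comp_hasDerivAt t hline

private lemma descent_lemma {g : E → ℝ} {G : E → E} (hg : ∀ p, HasGradientAt g (G p) p)
    {M : ℝ} (hlip : ∀ p q, ‖G p - G q‖ ≤ M * ‖p - q‖) (x y : E) :
    g y ≤ g x + ⟪G x, y - x⟫ + M / 2 * ‖y - x‖ ^ 2 := by
  set d := y - x with hd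
  set h : ℝ → ℝ := fun t => g (x + t • d) - t * ⟪G x, d⟫ - M / 2 * ‖d‖ ^ 2 * t ^ 2 with hh
  have hder : ∀ t : ℝ, HasDerivAt h
      (⟪G (x + t • d), d⟫ - ⟪G x, d⟫ - M / 2 * ‖d‖ ^ 2 * (2 * t)) t := by
    intro t
    have h1 := line_hasDerivAt hg x d t
    have h2 : HasDerivAt (fun t : ℝ => t * ⟪G x, d⟫) ⟪G x, d⟫ t := by
      simpa using hasDerivAt_mul_const ⟪G x, d⟫
    have h3 : HasDerivAt (fun t : ℝ => M / 2 * ‖d‖ ^ 2 * t ^ 2)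
        (M / 2 * ‖d‖ ^ 2 * (2 * t)) t := by
      have := (hasDerivAt_pow 2 t).const_mul (M / 2 * ‖d‖ ^ 2)
      exact this.congr_deriv (by ring)
    exact (h1.sub h2).sub h3
  have hanti : AntitoneOn h (Icc (0:ℝ) 1) := by
    apply antitoneOn_of_deriv_nonpos (convex_Icc 0 1)
    · exact Continuous.continuousOn (by
        exact continuous_iff_continuousAt.2 fun t => (hder t).differentiableAt.continuousAt)
    · intro t ht
      exact (hder t).differentiableAt.differentiableWithinAt
    · intro t ht
      rw [interior_Icc] at ht
      rw [(hder t).deriv]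
      have hb : ⟪G (x + t • d) - G x, d⟫ ≤ M * t * ‖d‖ ^ 2 := by
        calc ⟪G (x + t • d) - G x, d⟫ ≤ ‖G (x + t • d) - G x‖ * ‖d‖ :=
              real_inner_le_norm _ _
          _ ≤ (M * ‖(x + t • d) - x‖) * ‖d‖ := by
              have := hlip (x + t • d) x
              nlinarith [norm_nonneg d]
          _ = M * t * ‖d‖ ^ 2 := by
              simp [norm_smul, abs_of_pos ht.1]; ring
      rw [inner_sub_left] at hb
      nlinarith
  have h10 := hanti (by norm_num : (0:ℝ) ∈ Icc (0:ℝ) 1) (by norm_num : (1:ℝ) ∈ Icc (0:ℝ) 1)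
    (by norm_num)
  simp only [hh] at h10
  have hxy : x + (1:ℝ) • d = y := by simp [hd]
  rw [hxy] at h10
  simp at h10
  linarith

end Aux

set_option maxHeartbeats 2000000 in
/-- (Theorem 5 in the paper: `O(ε⁻²)` complexity of Algorithm CEB
with `r ≡ 0`.)  Along the CEB iterates, the barrier multipliers
`λᵏᵢ = −μ/(cᵢ(xᵏ) + ∇cᵢ(xᵏ)ᵀdᵏ + (Lᵢ/2)‖dᵏ‖²)` are positive, the stationarity identity
`∇f(xᵏ) + 2Ldᵏ + Σᵢ λᵏᵢ(∇cᵢ(xᵏ) + Lᵢdᵏ) = 0` holds, and if `‖λᵏ‖_∞ ≤ B` for all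
`k < K` then `min_{k<K} ‖∇f(xᵏ) + Σᵢ λᵏᵢ∇cᵢ(xᵏ)‖ ≤ (2L + BΣᵢLᵢ)√(2(F_μ(x⁰) − F*)/(LK))`. -/
theorem ceb_complexity {n m : ℕ}
    (f : EuclideanSpace ℝ (Fin n) → ℝ)
    (c : Fin m → EuclideanSpace ℝ (Fin n) → ℝ)
    (f' : EuclideanSpace ℝ (Fin n) → EuclideanSpace ℝ (Fin n))
    (c' : Fin m → EuclideanSpace ℝ (Fin n) → EuclideanSpace ℝ (Fin n))
    (hf : ∀ x, HasGradientAt f (f' x) x)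
    (hc : ∀ i x, HasGradientAt (c i) (c' i x) x)
    (L : ℝ) (Li : Fin m → ℝ) (hL : 0 < L) (hLi : ∀ i, 0 < Li i)
    (hflip : ∀ x y, ‖f' x - f' y‖ ≤ L * ‖x - y‖)
    (hclip : ∀ i x y, ‖c' i x - c' i y‖ ≤ Li i * ‖x - y‖)
    (μ : ℝ) (hμ : 0 < μ)
    -- lower bound of the barrier function on the strictly feasible set
    (Fstar : ℝ)
    (hFstar : ∀ z, (∀ i, c i z < 0) →
      Fstar ≤ f z - μ * ∑ i, Real.log (-(c i z)))
    -- Algorithm CEB (with r ≡ 0): the iterates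
    (x : ℕ → EuclideanSpace ℝ (Fin n))
    (hx0 : ∀ i, c i (x 0) < 0)
    (hstepD : ∀ k i, c i (x k) + ⟪c' i (x k), x (k + 1) - x k⟫ +
      (Li i / 2) * ‖x (k + 1) - x k‖ ^ 2 < 0)
    (hstepmin : ∀ k z,
      (∀ i, c i (x k) + ⟪c' i (x k), z - x k⟫ + (Li i / 2) * ‖z - x k‖ ^ 2 < 0) →
      ⟪f' (x k), x (k + 1) - x k⟫ + L * ‖x (k + 1) - x k‖ ^ 2 -
          μ * ∑ i, Real.log (-(c i (x k)) - ⟪c' i (x k), x (k + 1) - x k⟫ -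
            (Li i / 2) * ‖x (k + 1) - x k‖ ^ 2) ≤
        ⟪f' (x k), z - x k⟫ + L * ‖z - x k‖ ^ 2 -
          μ * ∑ i, Real.log (-(c i (x k)) - ⟪c' i (x k), z - x k⟫ -
            (Li i / 2) * ‖z - x k‖ ^ 2))
    -- the barrier multipliers
    (lam : ℕ → Fin m → ℝ)
    (hlam : ∀ k i, lam k i = -μ / (c i (x k) + ⟪c' i (x k), x (k + 1) - x k⟫ +
      (Li i / 2) * ‖x (k + 1) - x k‖ ^ 2)) :
    (∀ k i, 0 < lam k i) ∧
    (∀ k, f' (x k) + (2 * L) • (x (k + 1) - x k) +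
      ∑ i, lam k i • (c' i (x k) + Li i • (x (k + 1) - x k)) = 0) ∧
    (∀ (B : ℝ) (K : ℕ), 1 ≤ K → (∀ k < K, ∀ i, lam k i ≤ B) →
      ∃ k < K, ‖f' (x k) + ∑ i, lam k i • c' i (x k)‖ ≤
        (2 * L + B * ∑ i, Li i) *
          Real.sqrt (2 * ((f (x 0) - μ * ∑ i, Real.log (-(c i (x 0)))) - Fstar) /
            (L * K))) := by
  -- notation
  set d : ℕ → EuclideanSpace ℝ (Fin n) := fun k => x (k + 1) - x k with hdd
  -- positivity of the multipliers
  have hlam_pos : ∀ k i, 0 < lam k i := by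
    intro k i
    rw [hlam k i]
    exact div_pos_of_neg_of_neg (by linarith) (hstepD k i)
  -- the key scalar identity : lam k i = μ * (u k i)⁻¹ where u is the positive slack
  have hu_pos : ∀ k i, 0 < -(c i (x k)) - ⟪c' i (x k), d k⟫ - (Li i / 2) * ‖d k‖ ^ 2 := by
    intro k i
    have := hstepD k i
    simp only [hdd]
    linarith
  -- stationarity
  have hstat : ∀ k, f' (x k) + (2 * L) • (x (k + 1) - x k) +
      ∑ i, lam k i • (c' i (x k) + Li i • (x (k + 1) - x k)) = 0 := by
    intro k
    set x0 := x k with hx0eq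
    set p := x (k + 1) with hpeq
    set a := f' (x k) with haeq
    -- the model function
    set φ : EuclideanSpace ℝ (Fin n) → ℝ := fun z => (⟪a, z - x0⟫ + L * ‖z - x0‖ ^ 2) -
      μ * ∑ i, Real.log (-(c i x0) - ⟪c' i x0, z - x0⟫ - (Li i / 2) * ‖z - x0‖ ^ 2) with hφ
    set u : Fin m → ℝ := fun i => -(c i x0) - ⟪c' i x0, p - x0⟫ - (Li i / 2) * ‖p - x0‖ ^ 2
      with hudef
    have hup : ∀ i, 0 < u i := fun i => hu_pos k i
    -- gradient of φ at p
    have hgi : ∀ i ∈ Finset.univ, HasGradientAt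
        (fun z => Real.log (-(c i x0) - ⟪c' i x0, z - x0⟫ - (Li i / 2) * ‖z - x0‖ ^ 2))
        ((u i)⁻¹ • (-(c' i x0) + (2 * -(Li i / 2)) • (p - x0))) p := by
      intro i _
      have hq := hga_quad (-(c' i x0)) x0 p (-(Li i / 2))
      have hq' : HasGradientAt
          (fun z => -(c i x0) - ⟪c' i x0, z - x0⟫ - (Li i / 2) * ‖z - x0‖ ^ 2)
          (-(c' i x0) + (2 * -(Li i / 2)) • (p - x0)) p := by
        have := hga_const_add (-(c i x0)) hq
        convert this using 2 with z
        simp only [inner_neg_left]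
        ring
      exact hga_log hq' (ne_of_gt (hup i))
    have hgsum := hga_sum Finset.univ hgi
    have hgφ : HasGradientAt φ
        ((a + (2 * L) • (p - x0)) -
          μ • ∑ i, (u i)⁻¹ • (-(c' i x0) + (2 * -(Li i / 2)) • (p - x0))) p :=
      hga_sub (hga_quad a x0 p L) (hga_const_mul μ hgsum)
    -- the gradient equals the claimed expression
    have heq : (a + (2 * L) • (p - x0)) -
        μ • ∑ i, (u i)⁻¹ • (-(c' i x0) + (2 * -(Li i / 2)) • (p - x0)) =
        f' (x k) + (2 * L) • (x (k + 1) - x k) +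
          ∑ i, lam k i • (c' i (x k) + Li i • (x (k + 1) - x k)) := by
    -- massage the sum
      rw [sub_eq_add_neg]
      congr 1
      rw [Finset.smul_sum, ← Finset.sum_neg_distrib]
      apply Finset.sum_congr rfl
      intro i _
      have hlam' : lam k i = μ * (u i)⁻¹ := by
        rw [hlam k i]
        have : c i (x k) + ⟪c' i (x k), x (k + 1) - x k⟫ +
            (Li i / 2) * ‖x (k + 1) - x k‖ ^ 2 = -(u i) := by
          simp only [hudef, hx0eq, hpeq]
          ring
        rw [this, div_neg, neg_div, neg_neg, div_eq_mul_inv]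
      have h2 : (2 : ℝ) * -(Li i / 2) = -(Li i) := by ring
      rw [h2, hlam']
      module
    rw [heq] at hgφ
    -- local minimality
    have hS : IsOpen {z : EuclideanSpace ℝ (Fin n) |
        ∀ i, c i x0 + ⟪c' i x0, z - x0⟫ + (Li i / 2) * ‖z - x0‖ ^ 2 < 0} := by
      have : {z : EuclideanSpace ℝ (Fin n) |
          ∀ i, c i x0 + ⟪c' i x0, z - x0⟫ + (Li i / 2) * ‖z - x0‖ ^ 2 < 0} =
          ⋂ i, {z | c i x0 + ⟪c' i x0, z - x0⟫ + (Li i / 2) * ‖z - x0‖ ^ 2 < 0} := by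
        ext z; simp
      rw [this]
      apply isOpen_iInter_of_finite
      intro i
      apply isOpen_lt _ continuous_const
      have h1 : Continuous fun z : EuclideanSpace ℝ (Fin n) => ⟪c' i x0, z - x0⟫ :=
        continuous_const.inner (continuous_id.sub continuous_const)
      have h2 : Continuous fun z : EuclideanSpace ℝ (Fin n) => ‖z - x0‖ ^ 2 :=
        (continuous_id.sub continuous_const).norm.pow 2
      exact (continuous_const.add h1).add (continuous_const.mul h2)
    have hmem : p ∈ {z : EuclideanSpace ℝ (Fin n) |
        ∀ i, c i x0 + ⟪c' i x0, z - x0⟫ + (Li i / 2) * ‖z - x0‖ ^ 2 < 0} :=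
      fun i => hstepD k i
    have hlocmin : IsLocalMin φ p := by
      apply Filter.eventually_iff_exists_mem.2
      refine ⟨_, hS.mem_nhds hmem, fun z hz => ?_⟩
      exact hstepmin k z hz
    have := hlocmin.hasFDerivAt_eq_zero (hasGradientAt_iff_hasFDerivAt.1 hgφ)
    have h0 : f' (x k) + (2 * L) • (x (k + 1) - x k) +
        ∑ i, lam k i • (c' i (x k) + Li i • (x (k + 1) - x k)) =
        (InnerProductSpace.toDual ℝ _).symm 0 := by
      rw [← this]; simp
    simpa using h0
  refine ⟨hlam_pos, hstat, ?_⟩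
  -- the complexity bound
  intro B K hK hB
  set F : EuclideanSpace ℝ (Fin n) → ℝ := fun z => f z - μ * ∑ i, Real.log (-(c i z)) with hF
  -- feasibility of all iterates
  have feas : ∀ k i, c i (x k) < 0 := by
    intro k
    induction k with
    | zero => exact hx0
    | succ k ih =>
      intro i
      have hdl := descent_lemma (hc i) (hclip i) (x k) (x (k + 1))
      have := hstepD k i
      linarith
  -- descent of the barrier function
  have hdec : ∀ k, F (x (k + 1)) ≤ F (x k) - L / 2 * ‖d k‖ ^ 2 := by
    intro k
    have hfd := descent_lemma hf hflip (x k) (x (k + 1))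
    have hlog : ∀ i ∈ Finset.univ,
        Real.log (-(c i (x k)) - ⟪c' i (x k), x (k + 1) - x k⟫ -
          (Li i / 2) * ‖x (k + 1) - x k‖ ^ 2) ≤ Real.log (-(c i (x (k + 1)))) := by
      intro i _
      have hcd := descent_lemma (hc i) (hclip i) (x k) (x (k + 1))
      have hu := hu_pos k i
      rw [Real.log_le_log_iff (by simpa [hdd] using hu) (by linarith)]
      simp only [hdd] at hu ⊢
      linarith
    have hsum := Finset.sum_le_sum hlog
    have hsum' := mul_le_mul_of_nonneg_left hsum (le_of_lt hμ)
    have hmin := hstepmin k (x k) (fun i => by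
      simp only [sub_self, inner_zero_right, norm_zero, add_zero]
      simpa using feas k i)
    simp only [sub_self, inner_zero_right, norm_zero, ne_eq, OfNat.ofNat_ne_zero,
      not_false_eq_true, zero_pow, mul_zero, sub_zero, zero_add, zero_sub, add_zero] at hmin
    simp only [hF, hdd]
    linarith
  -- telescoping
  have tele : ∀ K' : ℕ, F (x K') + ∑ k ∈ Finset.range K', L / 2 * ‖d k‖ ^ 2 ≤ F (x 0) := by
    intro K'
    induction K' with
    | zero => simp
    | succ K' ih =>
      rw [Finset.sum_range_succ]
      have := hdec K'
      linarith
  have hΔ : ∑ k ∈ Finset.range K, L / 2 * ‖d k‖ ^ 2 ≤ F (x 0) - Fstar := by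
    have := tele K
    have := hFstar (x K) (feas K)
    simp only [hF] at *
    linarith
  -- pick the best iterate
  set Δ : ℝ := F (x 0) - Fstar with hΔdef
  have hKpos : (0:ℝ) < K := by exact_mod_cast hK
  have hbest : ∃ k ∈ Finset.range K, L / 2 * ‖d k‖ ^ 2 ≤ Δ / K := by
    by_contra hcon
    push_neg at hcon
    have hlt : ∑ k ∈ Finset.range K, Δ / K < ∑ k ∈ Finset.range K, L / 2 * ‖d k‖ ^ 2 :=
      Finset.sum_lt_sum_of_nonempty (Finset.nonempty_range_iff.2 (by omega)) hcon
    rw [Finset.sum_const, Finset.card_range, nsmul_eq_mul] at hlt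
    rw [mul_div_cancel₀ _ (ne_of_gt hKpos)] at hlt
    linarith
  obtain ⟨k, hkK, hk⟩ := hbest
  rw [Finset.mem_range] at hkK
  refine ⟨k, hkK, ?_⟩
  -- the gradient-mapping bound at iterate k
  have hsplit : ∑ i, lam k i • (c' i (x k) + Li i • d k) =
      (∑ i, lam k i • c' i (x k)) + (∑ i, lam k i * Li i) • d k := by
    simp only [smul_add, Finset.sum_add_distrib, smul_smul]
    rw [← Finset.sum_smul]
  have h2 := hstat k
  change f' (x k) + (2 * L) • d k + ∑ i, lam k i • (c' i (x k) + Li i • d k) = 0 at h2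
  rw [hsplit] at h2
  have hvec : f' (x k) + ∑ i, lam k i • c' i (x k) =
      -((2 * L + ∑ i, lam k i * Li i) • d k) := by
    rw [add_smul]
    have : (f' (x k) + ∑ i, lam k i • c' i (x k)) +
        ((2 * L) • d k + (∑ i, lam k i * Li i) • d k) = 0 := by
      rw [← h2]; abel
    linear_combination (norm := module) this
  set s : ℝ := 2 * L + ∑ i, lam k i * Li i with hsdef
  have hs_pos : 0 < s := by
    have : (0:ℝ) ≤ ∑ i, lam k i * Li i :=
      Finset.sum_nonneg fun i _ => le_of_lt (mul_pos (hlam_pos k i) (hLi i))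
    simp only [hsdef]; linarith
  have hs_le : s ≤ 2 * L + B * ∑ i, Li i := by
    have : ∑ i, lam k i * Li i ≤ ∑ i, B * Li i :=
      Finset.sum_le_sum fun i _ =>
        mul_le_mul_of_nonneg_right (hB k hkK i) (le_of_lt (hLi i))
    rw [Finset.mul_sum]
    simp only [hsdef]
    linarith
  have hnorm : ‖f' (x k) + ∑ i, lam k i • c' i (x k)‖ = s * ‖d k‖ := by
    rw [hvec, norm_neg, norm_smul, Real.norm_eq_abs, abs_of_pos hs_pos]
  clear_value d F Δ s
  have hdk : ‖d k‖ ≤ Real.sqrt (2 * Δ / (L * K)) := by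
    apply Real.le_sqrt_of_sq_le
    have heq2 : 2 * Δ / (L * ↑K) = 2 / L * (Δ / ↑K) := by ring
    have h3 : (0:ℝ) < 2 / L := by positivity
    have h4 : 2 / L * (L / 2 * ‖d k‖ ^ 2) = ‖d k‖ ^ 2 := by field_simp
    have h5 := mul_le_mul_of_nonneg_left hk (le_of_lt h3)
    rw [heq2]
    linarith
  rw [hnorm]
  calc s * ‖d k‖ ≤ (2 * L + B * ∑ i, Li i) * ‖d k‖ :=
        mul_le_mul_of_nonneg_right hs_le (norm_nonneg _)
    _ ≤ (2 * L + B * ∑ i, Li i) * Real.sqrt (2 * Δ / (L * K)) :=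
        mul_le_mul_of_nonneg_left hdk (by linarith)
end
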